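/- Let X be a Banach lattice and let S = (S(t))_{t≥0} be a convex C₀-semigroup on X. Let (x_n)_{n∈ℕ} and (y_n)_{n∈ℕ} be sequences in X with x_n → x ∈ X and y_n → y ∈ X in norm, and let (h_n)_{n∈ℕ} be a sequence in (0,∞) with h_n ↓ 0. Then S(h_n)(x_n + y_n) − S(h_n)x_n → y in norm as n → ∞. -/

import Mathlib

open Filter Topology Set

section Aux

variable {X : Type*} [NormedAddCommGroup X] [Lattice X] [HasSolidNorm X]
    [IsOrderedAddMonoid X] [NormedSpace ℝ X] [PosSMulStrictMono ℝ X]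

lemma aux_sandwich_norm {l a u : X} (h1 : l ≤ a) (h2 : a ≤ u) : ‖a‖ ≤ ‖l‖ + ‖u‖ := by
  have hnn : (0 : X) ≤ |l| + |u| := add_nonneg (abs_nonneg l) (abs_nonneg u)
  have habs : |a| ≤ |(|l| + |u|)| := by
    rw [abs_of_nonneg hnn]
    refine abs_le'.mpr ⟨?_, ?_⟩
    · exact le_add_of_nonneg_of_le (abs_nonneg l) (h2.trans (le_abs_self u))
    · exact le_add_of_le_of_nonneg ((neg_le_neg h1).trans (neg_le_abs l)) (abs_nonneg u)
  calc ‖a‖ ≤ ‖|l| + |u|‖ := norm_le_norm_of_abs_le_abs habs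
    _ ≤ ‖|l|‖ + ‖|u|‖ := norm_add_le _ _
    _ = ‖l‖ + ‖u‖ := by rw [norm_abs_eq_norm, norm_abs_eq_norm]

lemma aux_key {T : X → X}
    (hT : ∀ u v : X, ∀ a : ℝ, 0 ≤ a → a ≤ 1 → T (a • u + (1 - a) • v) ≤ a • T u + (1 - a) • T v)
    {c : X} {ε M : ℝ} (hε : 0 < ε)
    (hM : ∀ w : X, ‖w - c‖ ≤ ε → ‖T w‖ ≤ M)
    {a b : X} (ha : ‖a - c‖ ≤ ε / 4) (hb : ‖b - c‖ ≤ ε / 4) :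
    ∃ g : X, T b - T a ≤ g ∧ ‖g‖ ≤ 4 * M / ε * ‖b - a‖ := by
  rcases eq_or_ne b a with rfl | hne
  · exact ⟨0, by simp, by simp⟩
  set d := ‖b - a‖ with hd
  have hd0 : 0 < d := norm_pos_iff.mpr (sub_ne_zero.mpr hne)
  have hdle : d ≤ ε / 2 := by
    have h1 : ‖b - a‖ ≤ ‖b - c‖ + ‖c - a‖ := by
      have : b - a = (b - c) + (c - a) := by abel
      rw [this]; exact norm_add_le _ _
    have h2 : ‖c - a‖ = ‖a - c‖ := norm_sub_rev _ _
    rw [h2] at h1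
    calc d ≤ ‖b - c‖ + ‖a - c‖ := h1
      _ ≤ ε / 4 + ε / 4 := add_le_add hb ha
      _ = ε / 2 := by ring
  set lam := 2 * d / ε with hlam
  have hlam0 : 0 < lam := div_pos (by linarith) hε
  have hlam1 : lam ≤ 1 := by rw [hlam, div_le_one hε]; linarith
  set w := a + (ε / (2 * d)) • (b - a) with hw
  have hwc : ‖w - c‖ ≤ ε := by
    have heq : w - c = (a - c) + (ε / (2 * d)) • (b - a) := by rw [hw]; abel
    have h1 : ‖w - c‖ ≤ ‖a - c‖ + ‖(ε / (2 * d)) • (b - a)‖ := by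
      rw [heq]; exact norm_add_le _ _
    have h2 : ‖(ε / (2 * d)) • (b - a)‖ = ε / 2 := by
      rw [norm_smul, Real.norm_eq_abs, abs_of_pos (div_pos hε (by linarith)), ← hd]
      field_simp
    linarith
  have hMw := hM w hwc
  have hMa := hM a (ha.trans (by linarith))
  have hcomb : lam • w + (1 - lam) • a = b := by
    have hs : lam * (ε / (2 * d)) = 1 := by
      rw [hlam]; field_simp
    rw [hw, smul_add, smul_smul, hs, one_smul]
    module
  have hineq := hT w a lam hlam0.le hlam1
  rw [hcomb] at hineq
  refine ⟨lam • T w + (1 - lam) • T a - T a, sub_le_sub_right hineq _, ?_⟩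
  have heq2 : lam • T w + (1 - lam) • T a - T a = lam • (T w - T a) := by module
  rw [heq2, norm_smul, Real.norm_eq_abs, abs_of_pos hlam0]
  have hTn : ‖T w - T a‖ ≤ 2 * M := (norm_sub_le _ _).trans (by linarith)
  calc lam * ‖T w - T a‖ ≤ lam * (2 * M) := mul_le_mul_of_nonneg_left hTn hlam0.le
    _ = 4 * M / ε * d := by rw [hlam]; field_simp; ring

lemma aux_lip {T : X → X}
    (hT : ∀ u v : X, ∀ a : ℝ, 0 ≤ a → a ≤ 1 → T (a • u + (1 - a) • v) ≤ a • T u + (1 - a) • T v)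
    {c : X} {ε M : ℝ} (hε : 0 < ε)
    (hM : ∀ w : X, ‖w - c‖ ≤ ε → ‖T w‖ ≤ M)
    {u v : X} (hu : ‖u - c‖ ≤ ε / 4) (hv : ‖v - c‖ ≤ ε / 4) :
    ‖T u - T v‖ ≤ 8 * M / ε * ‖u - v‖ := by
  obtain ⟨g1, hg1, hg1n⟩ := aux_key hT hε hM hv hu
  obtain ⟨g2, hg2, hg2n⟩ := aux_key hT hε hM hu hv
  have hl : -g2 ≤ T u - T v := by
    have := neg_le_neg hg2
    simpa [neg_sub] using this
  have hsand := aux_sandwich_norm hl hg1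
  rw [norm_neg] at hsand
  rw [norm_sub_rev v u] at hg2n
  have hring : 4 * M / ε * ‖u - v‖ + 4 * M / ε * ‖u - v‖ = 8 * M / ε * ‖u - v‖ := by ring
  linarith

lemma aux_transfer {T : X → X}
    (hT : ∀ u v : X, ∀ a : ℝ, 0 ≤ a → a ≤ 1 → T (a • u + (1 - a) • v) ≤ a • T u + (1 - a) • T v)
    {x₀ : X} {ε k : ℝ} (hε : 0 < ε)
    (hball : ∀ w : X, ‖w - x₀‖ ≤ ε → ‖T w‖ ≤ k)
    (z : X) {Kp Kq : ℝ}
    (hKp : ‖T ((2:ℝ) • z - x₀)‖ ≤ Kp)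
    (hKq : ‖T (x₀ - (2:ℝ) • (z - x₀))‖ ≤ Kq) :
    ∀ w : X, ‖w - z‖ ≤ ε / 2 → ‖T w‖ ≤ 2 * k + Kp / 2 + Kq / 2 := by
  intro w hw
  set p := (2:ℝ) • z - x₀ with hp
  set q := x₀ - (2:ℝ) • (z - x₀) with hq
  -- upper bound
  set u := (2:ℝ) • w - p with hu
  have hu_ball : ‖u - x₀‖ ≤ ε := by
    have heq : u - x₀ = (2:ℝ) • (w - z) := by rw [hu, hp]; module
    rw [heq, norm_smul, Real.norm_eq_abs]
    rw [show |(2:ℝ)| = 2 by norm_num]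
    linarith
  have hwu : (1/2 : ℝ) • u + (1 - 1/2 : ℝ) • p = w := by rw [hu]; module
  have hup := hT u p (1/2) (by norm_num) (by norm_num)
  rw [hwu] at hup
  have hUn : ‖(1/2 : ℝ) • T u + (1 - 1/2 : ℝ) • T p‖ ≤ k / 2 + Kp / 2 := by
    have h1 : ‖(1/2 : ℝ) • T u + (1 - 1/2 : ℝ) • T p‖ ≤ ‖(1/2 : ℝ) • T u‖ + ‖(1 - 1/2 : ℝ) • T p‖ :=
      norm_add_le _ _
    rw [norm_smul, norm_smul, Real.norm_eq_abs, Real.norm_eq_abs] at h1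
    have h2 := hball u hu_ball
    have h3 : |(1/2 : ℝ)| = 1/2 := by norm_num
    have h4 : |(1 - 1/2 : ℝ)| = 1/2 := by norm_num
    rw [h3, h4] at h1
    nlinarith [norm_nonneg (T u), norm_nonneg (T p)]
  -- lower bound
  set a := (2/3 : ℝ) • w + (1 - 2/3 : ℝ) • q with haa
  have ha_ball : ‖a - x₀‖ ≤ ε := by
    have heq : a - x₀ = (2/3 : ℝ) • (w - z) := by rw [haa, hq]; module
    rw [heq, norm_smul, Real.norm_eq_abs]
    rw [show |(2/3 : ℝ)| = 2/3 by norm_num]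
    linarith
  have hlow := hT w q (2/3) (by norm_num) (by norm_num)
  rw [← haa] at hlow
  have hLle : (3/2 : ℝ) • T a - (1/2 : ℝ) • T q ≤ T w := by
    have h1 : (3/2 : ℝ) • T a ≤ (3/2 : ℝ) • ((2/3 : ℝ) • T w + (1 - 2/3 : ℝ) • T q) :=
      smul_le_smul_of_nonneg_left hlow (by norm_num)
    have h2 : (3/2 : ℝ) • ((2/3 : ℝ) • T w + (1 - 2/3 : ℝ) • T q) = T w + (1/2 : ℝ) • T q := by
      module
    rw [h2] at h1
    exact sub_le_iff_le_add.mpr h1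
  have hLn : ‖(3/2 : ℝ) • T a - (1/2 : ℝ) • T q‖ ≤ 3/2 * k + Kq / 2 := by
    have h1 : ‖(3/2 : ℝ) • T a - (1/2 : ℝ) • T q‖ ≤ ‖(3/2 : ℝ) • T a‖ + ‖(1/2 : ℝ) • T q‖ :=
      norm_sub_le _ _
    rw [norm_smul, norm_smul, Real.norm_eq_abs, Real.norm_eq_abs] at h1
    have h2 := hball a ha_ball
    rw [show |(3/2 : ℝ)| = 3/2 by norm_num, show |(1/2 : ℝ)| = 1/2 by norm_num] at h1
    nlinarith [norm_nonneg (T a), norm_nonneg (T q)]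
  have := aux_sandwich_norm hLle hup
  linarith

lemma aux_cont {T : X → X}
    (hT : ∀ u v : X, ∀ a : ℝ, 0 ≤ a → a ≤ 1 → T (a • u + (1 - a) • v) ≤ a • T u + (1 - a) • T v)
    (hb : ∀ r : ℝ, 0 < r → ∃ M : ℝ, ∀ x : X, ‖x‖ ≤ r → ‖T x‖ ≤ M) :
    Continuous T := by
  rw [continuous_iff_continuousAt]
  intro z
  obtain ⟨M, hM⟩ := hb (‖z‖ + 4) (by positivity)
  have hM' : ∀ w : X, ‖w - z‖ ≤ 4 → ‖T w‖ ≤ M := by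
    intro w hw
    refine hM w ?_
    have h1 : ‖w‖ = ‖(w - z) + z‖ := by rw [sub_add_cancel]
    have h2 : ‖(w - z) + z‖ ≤ ‖w - z‖ + ‖z‖ := norm_add_le _ _
    linarith
  refine continuousAt_of_locally_lipschitz (show (0:ℝ) < 1 by norm_num) (8 * M / 4) ?_
  intro u hu
  rw [dist_eq_norm, dist_eq_norm]
  rw [dist_eq_norm] at hu
  exact aux_lip hT (show (0:ℝ) < 4 by norm_num) hM'
    (by linarith : ‖u - z‖ ≤ 4 / 4) (by simp : ‖z - z‖ ≤ 4 / 4)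

end Aux

/-- For a convex C₀-semigroup `S`, sequences `xₙ → x`, `yₙ → y` and `hₙ ↓ 0`
with `hₙ > 0`, one has `S(hₙ)(xₙ + yₙ) − S(hₙ)xₙ → y` in norm. -/
theorem convex_semigroup_cross_convergence
    {X : Type*} [NormedAddCommGroup X] [Lattice X] [HasSolidNorm X]
    [IsOrderedAddMonoid X] [NormedSpace ℝ X] [CompleteSpace X]
    [PosSMulStrictMono ℝ X]
    (S : ℝ → X → X)
    (hconv : ∀ t : ℝ, 0 ≤ t → ∀ x y : X, ∀ a : ℝ, 0 ≤ a → a ≤ 1 →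
      S t (a • x + (1 - a) • y) ≤ a • S t x + (1 - a) • S t y)
    (hbdd : ∀ t : ℝ, 0 ≤ t → ∀ r : ℝ, 0 < r → ∃ M : ℝ, ∀ x : X, ‖x‖ ≤ r → ‖S t x‖ ≤ M)
    (hid : ∀ x : X, S 0 x = x)
    (hsg : ∀ s t : ℝ, 0 ≤ s → 0 ≤ t → ∀ x : X, S (t + s) x = S t (S s x))
    (hc0 : ∀ x : X, Tendsto (fun t : ℝ => S t x) (𝓝[>] (0 : ℝ)) (𝓝 x))
    (xs ys : ℕ → X) (x y : X)
    (hx : Tendsto xs atTop (𝓝 x)) (hy : Tendsto ys atTop (𝓝 y))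
    (h : ℕ → ℝ) (hpos : ∀ n, 0 < h n) (hanti : Antitone h)
    (hh : Tendsto h atTop (𝓝 (0 : ℝ))) :
    Tendsto (fun n => S (h n) (xs n + ys n) - S (h n) (xs n)) atTop (𝓝 y) := by
  have hT : ∀ n, ∀ u v : X, ∀ a : ℝ, 0 ≤ a → a ≤ 1 →
      S (h n) (a • u + (1 - a) • v) ≤ a • S (h n) u + (1 - a) • S (h n) v :=
    fun n => hconv (h n) (hpos n).le
  have hh' : Tendsto h atTop (𝓝[>] (0:ℝ)) :=
    tendsto_nhdsWithin_of_tendsto_nhds_of_eventually_within _ hh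
      (Eventually.of_forall fun n => hpos n)
  have hSconv : ∀ p : X, Tendsto (fun n => S (h n) p) atTop (𝓝 p) := fun p => (hc0 p).comp hh'
  have hcont : ∀ n, Continuous (S (h n)) := fun n =>
    aux_cont (hT n) (hbdd (h n) (hpos n).le)
  -- Baire category: uniform bound on some ball
  set f : ℕ → Set X := fun k => {w | ∀ n, ‖S (h n) w‖ ≤ k} with hf
  have hfc : ∀ k, IsClosed (f k) := by
    intro k
    have heq : f k = ⋂ n, (fun w => ‖S (h n) w‖) ⁻¹' Iic (k : ℝ) := by
      ext w; simp [hf]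
    rw [heq]
    exact isClosed_iInter fun n => IsClosed.preimage (hcont n).norm isClosed_Iic
  have hfU : ⋃ k, f k = univ := by
    apply eq_univ_of_forall
    intro w
    have hbdd' : BddAbove (Set.range fun n => ‖S (h n) w‖) :=
      ((hSconv w).norm).bddAbove_range
    obtain ⟨B, hB⟩ := hbdd'
    obtain ⟨k, hk⟩ := exists_nat_ge B
    exact mem_iUnion.mpr ⟨k, fun n => (hB ⟨n, rfl⟩).trans hk⟩
  obtain ⟨k, x₀, hx₀⟩ := nonempty_interior_of_iUnion_of_closed hfc hfU
  obtain ⟨ε₀, hε₀, hball0⟩ := Metric.mem_nhds_iff.mp (mem_interior_iff_mem_nhds.mp hx₀)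
  set ε := ε₀ / 2 with hεdef
  have hε : 0 < ε := by positivity
  have hball : ∀ n, ∀ w : X, ‖w - x₀‖ ≤ ε → ‖S (h n) w‖ ≤ k := by
    intro n w hw
    have hmem : w ∈ Metric.ball x₀ ε₀ := by
      rw [Metric.mem_ball, dist_eq_norm]; linarith
    have := hball0 hmem
    simp only [hf, mem_setOf_eq] at this
    exact this n
  -- key: local uniform convergence of arguments
  have key : ∀ (z : X) (zs : ℕ → X), Tendsto zs atTop (𝓝 z) →
      Tendsto (fun n => S (h n) (zs n) - S (h n) z) atTop (𝓝 0) := by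
    intro z zs htz
    obtain ⟨Kp, hKp⟩ : ∃ Kp, ∀ n, ‖S (h n) ((2:ℝ) • z - x₀)‖ ≤ Kp := by
      obtain ⟨B, hB⟩ := ((hSconv ((2:ℝ) • z - x₀)).norm).bddAbove_range
      exact ⟨B, fun n => hB ⟨n, rfl⟩⟩
    obtain ⟨Kq, hKq⟩ : ∃ Kq, ∀ n, ‖S (h n) (x₀ - (2:ℝ) • (z - x₀))‖ ≤ Kq := by
      obtain ⟨B, hB⟩ := ((hSconv (x₀ - (2:ℝ) • (z - x₀))).norm).bddAbove_range
      exact ⟨B, fun n => hB ⟨n, rfl⟩⟩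
    set M : ℝ := 2 * k + Kp / 2 + Kq / 2 with hMdef
    have hMz : ∀ n, ∀ w : X, ‖w - z‖ ≤ ε / 2 → ‖S (h n) w‖ ≤ M := fun n =>
      aux_transfer (hT n) hε (hball n) z (hKp n) (hKq n)
    set C : ℝ := 8 * M / (ε / 2) with hCdef
    have hev : ∀ᶠ n in atTop, ‖zs n - z‖ ≤ (ε / 2) / 4 := by
      have hmem : Metric.closedBall z ((ε / 2) / 4) ∈ 𝓝 z :=
        Metric.closedBall_mem_nhds z (by positivity)
      filter_upwards [htz hmem] with n hn
      simp only [Set.mem_preimage, Metric.mem_closedBall, dist_eq_norm] at hn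
      exact hn
    have hnorm0 : Tendsto (fun n => ‖zs n - z‖) atTop (𝓝 0) :=
      tendsto_iff_norm_sub_tendsto_zero.mp htz
    refine squeeze_zero_norm' (a := fun n => C * ‖zs n - z‖) ?_ ?_
    · filter_upwards [hev] with n hn
      exact aux_lip (hT n) (by positivity : (0:ℝ) < ε / 2) (hMz n) hn
        (by rw [sub_self, norm_zero]; positivity)
    · have : Tendsto (fun n => C * ‖zs n - z‖) atTop (𝓝 (C * 0)) :=
        tendsto_const_nhds.mul hnorm0
      simpa using this
  have t1 : Tendsto (fun n => S (h n) (xs n + ys n) - S (h n) (x + y)) atTop (𝓝 0) :=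
    key (x + y) (fun n => xs n + ys n) (hx.add hy)
  have t2 : Tendsto (fun n => S (h n) (xs n) - S (h n) x) atTop (𝓝 0) :=
    key x xs hx
  have t3 : Tendsto (fun n => S (h n) (x + y) - S (h n) x) atTop (𝓝 y) := by
    have := (hSconv (x + y)).sub (hSconv x)
    simpa using this
  have heq : (fun n => S (h n) (xs n + ys n) - S (h n) (xs n)) =
      fun n => (S (h n) (xs n + ys n) - S (h n) (x + y)) +
        (S (h n) (x + y) - S (h n) x) - (S (h n) (xs n) - S (h n) x) := by
    funext n; abel
  rw [heq]
  have := (t1.add t3).sub t2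
  simpa using this
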